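/- Let D⁰ be a set with a distinguished element 0 and set D = D⁰ ∖ {0}, with D nonempty. Define ⊣ on D⁰ by: x ⊣ y = x if x ≠ 0 and y ≠ 0, and x ⊣ y = 0 if x = 0 or y = 0; and let ⊢ be the dual operation x ⊢ y = y ⊣ x. Then (D⁰,⊣,⊢) is an abelian dimonoid whose halo equals D, a bijection f : D⁰ → D⁰ is an automorphism of (D⁰,⊣,⊢) if and only if f(0) = 0 (so its automorphism group is isomorphic to S_D); moreover, if |D| > 1, then (D⁰,⊣,⊢) is not commutative. -/

import Mathlib

/-- A dimonoid: two associative operations `ld` (⊣) and `rd` (⊢) satisfying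
axioms (D1), (D2), (D3). -/
def IsDimonoid {D : Type*} (ld rd : D → D → D) : Prop :=
  (∀ x y z, ld (ld x y) z = ld x (ld y z)) ∧
  (∀ x y z, rd (rd x y) z = rd x (rd y z)) ∧
  (∀ x y z, ld (ld x y) z = ld x (rd y z)) ∧
  (∀ x y z, ld (rd x y) z = rd x (ld y z)) ∧
  (∀ x y z, rd (ld x y) z = rd x (rd y z))

/-- The automorphism group of a magma `(D, op)`, as a subgroup of `Equiv.Perm D`. -/
def semigroupAutGroup {D : Type*} (op : D → D → D) : Subgroup (Equiv.Perm D) where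
  carrier := {f : Equiv.Perm D | ∀ x y, f (op x y) = op (f x) (f y)}
  one_mem' := fun _ _ => rfl
  mul_mem' := by
    intro f g hf hg
    simp only [Set.mem_setOf_eq] at hf hg ⊢
    intro x y
    simp [Equiv.Perm.mul_apply, hg, hf]
  inv_mem' := by
    intro f hf
    simp only [Set.mem_setOf_eq] at hf ⊢
    intro x y
    apply f.injective
    rw [Equiv.Perm.coe_inv, Equiv.apply_symm_apply, hf, Equiv.apply_symm_apply, Equiv.apply_symm_apply]

/-- The automorphism group of a dimonoid `(D, ld, rd)`. -/
def dimonoidAutGroup {D : Type*} (ld rd : D → D → D) : Subgroup (Equiv.Perm D) :=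
  semigroupAutGroup ld ⊓ semigroupAutGroup rd

/-- The dimonoid `(LO_D ⋈ RO_D)⁺⁰`: on `D⁰ = D ∪ {0}` with `x ⊣ y = x` when
`x ≠ 0` and `y ≠ 0`, and `x ⊣ y = 0` otherwise, together with the dual
operation, one gets an abelian dimonoid with halo `D = D⁰ ∖ {0}`; its
automorphisms are exactly the bijections fixing `0`, so its automorphism group
is isomorphic to `S_D`; and if `|D| > 1` it is not commutative. -/
theorem LO_RO_plus_zero_dimonoid {D0 : Type*} (z : D0)
    (hD : ∃ x : D0, x ≠ z) (ld rd : D0 → D0 → D0)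
    (hld1 : ∀ x y, x ≠ z → y ≠ z → ld x y = x)
    (hld2 : ∀ x y, x = z ∨ y = z → ld x y = z)
    (hrd : ∀ x y, rd x y = ld y x) :
    IsDimonoid ld rd ∧
    (∀ x y, ld x y = rd y x) ∧
    {e : D0 | ∀ d, rd e d = d ∧ ld d e = d} = ({z} : Set D0)ᶜ ∧
    (∀ f : Equiv.Perm D0,
      ((∀ x y, f (ld x y) = ld (f x) (f y)) ∧ (∀ x y, f (rd x y) = rd (f x) (f y))) ↔
      f z = z) ∧
    Nonempty (↥(dimonoidAutGroup ld rd) ≃* Equiv.Perm ↥(({z} : Set D0)ᶜ)) ∧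
    ((({z} : Set D0)ᶜ).Nontrivial →
      ¬ ((∀ x y, ld x y = ld y x) ∧ (∀ x y, rd x y = rd y x))) := by
  classical
  have key : ∀ x y, ld x y = if x = z ∨ y = z then z else x := by
    intro x y
    split
    · exact hld2 x y ‹_›
    · next h => push_neg at h; exact hld1 x y h.1 h.2
  have habel : ∀ x y, ld x y = rd y x := fun x y => (hrd y x).symm
  have hiff : ∀ f : Equiv.Perm D0,
      ((∀ x y, f (ld x y) = ld (f x) (f y)) ∧ (∀ x y, f (rd x y) = rd (f x) (f y))) ↔
      f z = z := by
    intro f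
    constructor
    · rintro ⟨h1, -⟩
      have hx : f (f.symm z) = z := f.apply_symm_apply z
      have := h1 z (f.symm z)
      rw [key z (f.symm z), key (f z) (f (f.symm z)), hx] at this
      simpa using this
    · intro hz
      have hne : ∀ x, x ≠ z → f x ≠ z := by
        intro x hx h
        exact hx (f.injective (h.trans hz.symm))
      have hl : ∀ x y, f (ld x y) = ld (f x) (f y) := by
        intro x y
        by_cases hx : x = z
        · by_cases hy : y = z <;> simp [key, hx, hy, hz]
        · by_cases hy : y = z
          · simp [key, hx, hy, hz]
          · simp [key, hx, hy, hne _ hx, hne _ hy]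
      exact ⟨hl, fun x y => by rw [hrd, hrd, hl]⟩
  refine ⟨⟨?_, ?_, ?_, ?_, ?_⟩, habel, ?_, hiff, ?_, ?_⟩
  · intro a b c
    by_cases ha : a = z <;> by_cases hb : b = z <;> by_cases hc : c = z <;>
      simp [key, ha, hb, hc]
  · intro a b c
    by_cases ha : a = z <;> by_cases hb : b = z <;> by_cases hc : c = z <;>
      simp [hrd, key, ha, hb, hc]
  · intro a b c
    by_cases ha : a = z <;> by_cases hb : b = z <;> by_cases hc : c = z <;>
      simp [hrd, key, ha, hb, hc]
  · intro a b c
    by_cases ha : a = z <;> by_cases hb : b = z <;> by_cases hc : c = z <;>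
      simp [hrd, key, ha, hb, hc]
  · intro a b c
    by_cases ha : a = z <;> by_cases hb : b = z <;> by_cases hc : c = z <;>
      simp [hrd, key, ha, hb, hc]
  · -- halo
    ext e
    simp only [Set.mem_setOf_eq, Set.mem_compl_iff, Set.mem_singleton_iff]
    constructor
    · intro h he
      obtain ⟨a, ha⟩ := hD
      have := (h a).2
      rw [he, hld2 a z (Or.inr rfl)] at this
      exact ha this.symm
    · intro he d
      have h : ld d e = d := by
        by_cases hd : d = z
        · rw [hd, hld2 z e (Or.inl rfl)]
        · exact hld1 d e hd he
      exact ⟨by rw [hrd, h], h⟩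
  · -- the MulEquiv
    have hmem : ∀ f : Equiv.Perm D0, f ∈ dimonoidAutGroup ld rd ↔ f z = z := by
      intro f
      rw [dimonoidAutGroup, Subgroup.mem_inf]
      exact hiff f
    have hne : ∀ (f : Equiv.Perm D0), f z = z → ∀ x : D0, x ∈ ({z} : Set D0)ᶜ ↔
        f x ∈ ({z} : Set D0)ᶜ := by
      intro f hz x
      simp only [Set.mem_compl_iff, Set.mem_singleton_iff]
      constructor
      · intro hx h; exact hx (f.injective (h.trans hz.symm))
      · intro hx h; rw [h] at hx; exact hx hz
    refine ⟨{ toFun := fun f => Equiv.Perm.subtypePerm (f : Equiv.Perm D0)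
                (fun x => (hne f ((hmem f).mp f.2) x).symm)
              invFun := fun g => ⟨Equiv.Perm.ofSubtype g, (hmem _).mpr
                (Equiv.Perm.ofSubtype_apply_of_not_mem g (by simp))⟩
              left_inv := ?_
              right_inv := ?_
              map_mul' := ?_ }⟩
    · intro f
      ext x
      by_cases hx : x ∈ ({z} : Set D0)ᶜ
      · simp [Equiv.Perm.ofSubtype_apply_of_mem _ hx]
      · rw [Equiv.Perm.ofSubtype_apply_of_not_mem _ hx]
        simp only [Set.mem_compl_iff, Set.mem_singleton_iff, not_not] at hx
        rw [hx, (hmem f).mp f.2]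
    · intro g
      ext x
      simp [Equiv.Perm.subtypePerm_apply, Equiv.Perm.ofSubtype_apply_of_mem g x.2]
    · intro f g
      ext x
      rfl
  · -- not commutative
    rintro ⟨a, ha, b, hb, hab⟩ ⟨hc, -⟩
    simp only [Set.mem_compl_iff, Set.mem_singleton_iff] at ha hb
    have h1 := hld1 a b ha hb
    have h2 := hld1 b a hb ha
    exact hab (h1.symm.trans ((hc a b).trans h2))
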